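/- Let σ(t) = e^{−2κt} ∑_{m=1}^∞ (wt)^{2m}/(m!)² with w > 0. If κ ≥ w then sup_{t ≥ 0} σ(t) < ∞, and if κ < w then σ(t) → ∞ as t → ∞. In particular lim sup_{t→∞} σ(t) < ∞ if and only if κ ≥ w. -/

import Mathlib

open Real Filter

-- factorial inequalities
lemma fact2_le (n : ℕ) : ((2*n).factorial : ℝ) ≤ 4^n * (n.factorial)^2 := by
  have h : (2*n).factorial = (2*n).choose n * n.factorial * n.factorial := by
    have := Nat.choose_mul_factorial_mul_factorial (show n ≤ 2*n by omega)
    simpa [show 2*n - n = n by omega] using this.symm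
  have hc : (2*n).choose n ≤ 4^n :=
    le_trans (Nat.choose_le_choose n (by omega : 2*n ≤ 2*n+1)) (Nat.choose_middle_le_pow n)
  have : (2*n).factorial ≤ 4^n * n.factorial * n.factorial := by
    rw [h]; exact Nat.mul_le_mul_right _ (Nat.mul_le_mul_right _ hc)
  calc ((2*n).factorial : ℝ) ≤ ((4^n * n.factorial * n.factorial : ℕ) : ℝ) := by exact_mod_cast this
    _ = 4^n * (n.factorial)^2 := by push_cast; ring

lemma fact2_ge (n : ℕ) : (4:ℝ)^n * (n.factorial)^2 ≤ ((2*n+1).factorial : ℝ) := by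
  rcases Nat.eq_zero_or_pos n with rfl | hn
  · norm_num
  · have h4 : 4^n ≤ 2*n * (2*n).choose n := by
      simpa [Nat.centralBinom] using Nat.four_pow_le_two_mul_self_mul_centralBinom n hn
    have h : (2*n).factorial = (2*n).choose n * n.factorial * n.factorial := by
      have := Nat.choose_mul_factorial_mul_factorial (show n ≤ 2*n by omega)
      simpa [show 2*n - n = n by omega] using this.symm
    have key : 4^n * n.factorial * n.factorial ≤ (2*n+1).factorial := by
      calc 4^n * n.factorial * n.factorial
          ≤ (2*n * (2*n).choose n) * n.factorial * n.factorial :=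
            Nat.mul_le_mul_right _ (Nat.mul_le_mul_right _ h4)
        _ = 2*n * (2*n).factorial := by rw [h]; ring
        _ ≤ (2*n+1) * (2*n).factorial := Nat.mul_le_mul_right _ (by omega)
        _ = (2*n+1).factorial := (Nat.factorial_succ (2*n)).symm
    calc (4:ℝ)^n * (n.factorial)^2 = ((4^n * n.factorial * n.factorial : ℕ) : ℝ) := by
          push_cast; ring
      _ ≤ ((2*n+1).factorial : ℝ) := by exact_mod_cast key

lemma cosh_tail (y : ℝ) :
    HasSum (fun n : ℕ => y^(2*(n+1)) / ((2*(n+1)).factorial : ℝ)) (Real.cosh y - 1) := by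
  have h := (hasSum_nat_add_iff' (f := fun n : ℕ => y^(2*n) / ((2*n).factorial : ℝ)) 1).mpr
    (Real.hasSum_cosh y)
  simp only [Finset.range_one, Finset.sum_singleton] at h
  norm_num at h
  convert h using 2

lemma sinh_tail (y : ℝ) :
    HasSum (fun n : ℕ => y^(2*(n+1)+1) / ((2*(n+1)+1).factorial : ℝ)) (Real.sinh y - y) := by
  have h := (hasSum_nat_add_iff' (f := fun n : ℕ => y^(2*n+1) / ((2*n+1).factorial : ℝ)) 1).mpr
    (Real.hasSum_sinh y)
  simp only [Finset.range_one, Finset.sum_singleton] at h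
  norm_num at h
  convert h using 2

lemma k_sum (y : ℝ) (hy : 0 < y) :
    HasSum (fun n : ℕ => y^(2*(n+1)) / ((2*(n+1)+1).factorial : ℝ))
      ((Real.sinh y - y) / y) := by
  have h := (sinh_tail y).div_const y
  refine h.congr_fun fun n => ?_
  rw [pow_succ]
  have hf : ((2*(n+1)+1).factorial : ℝ) ≠ 0 := by positivity
  field_simp

lemma two_x_pow (x : ℝ) (n : ℕ) : (2*x)^(2*n) = 4^n * x^(2*n) := by
  rw [mul_pow, pow_mul]
  norm_num

lemma term_le (x : ℝ) (hx : 0 ≤ x) (n : ℕ) :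
    x^(2*n) / ((n.factorial : ℝ))^2 ≤ (2*x)^(2*n) / ((2*n).factorial : ℝ) := by
  rw [two_x_pow, div_le_div_iff₀ (by positivity) (by positivity)]
  have := mul_le_mul_of_nonneg_left (fact2_le n) (pow_nonneg hx (2*n))
  nlinarith [this]

lemma term_ge (x : ℝ) (hx : 0 ≤ x) (n : ℕ) :
    (2*x)^(2*n) / ((2*n+1).factorial : ℝ) ≤ x^(2*n) / ((n.factorial : ℝ))^2 := by
  rw [two_x_pow, div_le_div_iff₀ (by positivity) (by positivity)]
  have := mul_le_mul_of_nonneg_left (fact2_ge n) (pow_nonneg hx (2*n))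
  nlinarith [this]

lemma summable_F (x : ℝ) (hx : 0 ≤ x) :
    Summable (fun m : ℕ => x^(2*(m+1)) / (((m+1).factorial : ℝ))^2) := by
  refine Summable.of_nonneg_of_le (fun m => by positivity)
    (fun m => term_le x hx (m+1)) (cosh_tail (2*x)).summable

lemma S_le (x : ℝ) (hx : 0 ≤ x) :
    (∑' m : ℕ, x^(2*(m+1)) / (((m+1).factorial : ℝ))^2) ≤ Real.cosh (2*x) - 1 := by
  rw [← (cosh_tail (2*x)).tsum_eq]
  exact Summable.tsum_le_tsum (fun m => term_le x hx (m+1)) (summable_F x hx) (cosh_tail (2*x)).summable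

lemma le_S (x : ℝ) (hx : 0 < x) :
    (Real.sinh (2*x) - 2*x) / (2*x) ≤ ∑' m : ℕ, x^(2*(m+1)) / (((m+1).factorial : ℝ))^2 := by
  rw [← (k_sum (2*x) (by linarith)).tsum_eq]
  exact Summable.tsum_le_tsum (fun m => term_ge x hx.le (m+1)) (k_sum (2*x) (by linarith)).summable
    (summable_F x hx.le)

/-- Stability criterion: with `σ(t) = e^{−2κt} ∑_{m≥1} (wt)^{2m}/(m!)²`,
if `κ ≥ w` then `σ` is bounded on `[0,∞)`, if `κ < w` then `σ(t) → ∞`;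
in particular `limsup_{t→∞} σ(t) < ∞ ↔ κ ≥ w`. -/
theorem stmt3 (κ w : ℝ) (hw : 0 < w)
    (σ : ℝ → ℝ)
    (hσ : ∀ t : ℝ, σ t = Real.exp (-2 * κ * t) *
      ∑' m : ℕ, (w * t) ^ (2 * (m + 1)) / ((Nat.factorial (m + 1) : ℝ)) ^ 2) :
    (w ≤ κ → ∃ M : ℝ, ∀ t : ℝ, 0 ≤ t → σ t ≤ M) ∧
    (κ < w → Tendsto σ atTop atTop) ∧
    (Filter.limsup (fun t => ENNReal.ofReal (σ t)) atTop < ⊤ ↔ w ≤ κ) := by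
  -- boundedness when w ≤ κ
  have bdd : w ≤ κ → ∀ t : ℝ, 0 ≤ t → σ t ≤ 1 := by
    intro hk t ht
    rw [hσ t]
    have hx : 0 ≤ w * t := mul_nonneg hw.le ht
    have h1 : (∑' m : ℕ, (w*t)^(2*(m+1)) / (((m+1).factorial : ℝ))^2)
        ≤ Real.cosh (2*(w*t)) - 1 := S_le (w*t) hx
    have h2 : Real.cosh (2*(w*t)) - 1 ≤ Real.exp (2*(w*t)) := by
      rw [Real.cosh_eq]
      have : Real.exp (-(2*(w*t))) ≤ Real.exp (2*(w*t)) := Real.exp_le_exp.mpr (by linarith)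
      linarith
    have h3 : Real.exp (-2*κ*t) * (∑' m : ℕ, (w*t)^(2*(m+1)) / (((m+1).factorial : ℝ))^2)
        ≤ Real.exp (-2*κ*t) * Real.exp (2*(w*t)) :=
      mul_le_mul_of_nonneg_left (le_trans h1 h2) (Real.exp_nonneg _)
    calc Real.exp (-2*κ*t) * (∑' m : ℕ, (w*t)^(2*(m+1)) / (((m+1).factorial : ℝ))^2)
        ≤ Real.exp (-2*κ*t) * Real.exp (2*(w*t)) := h3
      _ = Real.exp ((2*w - 2*κ)*t) := by rw [← Real.exp_add]; ring_nf
      _ ≤ Real.exp 0 := Real.exp_le_exp.mpr (by nlinarith)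
      _ = 1 := Real.exp_zero
  have tends : κ < w → Tendsto σ atTop atTop := by
    intro hk
    set a := 2*(w - κ) with ha_def
    have ha : 0 < a := by simp [ha_def]; linarith
    -- the comparison function
    have hA : Tendsto (fun t => Real.exp (a*t) / (8*w*t)) atTop atTop := by
      have h1 : Tendsto (fun y : ℝ => Real.exp y / y) atTop atTop := by
        simpa using Real.tendsto_exp_div_pow_atTop 1
      have h2 : Tendsto (fun t : ℝ => a*t) atTop atTop :=
        (tendsto_id (α := ℝ)).const_mul_atTop ha
      have h3 := (h1.comp h2).const_mul_atTop (show 0 < a/(8*w) by positivity)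
      refine h3.congr' ?_
      filter_upwards [eventually_gt_atTop 0] with t ht
      have : a*t ≠ 0 := by positivity
      simp only [Function.comp_apply]
      field_simp
    refine tendsto_atTop_mono' atTop ?_ hA
    -- eventually exp y ≥ 4y + 2 for y = 2wt, and t > 0
    have hy : Tendsto (fun t : ℝ => 2*(w*t)) atTop atTop := by
      have h := (tendsto_id (α := ℝ)).const_mul_atTop (show (0:ℝ) < 2*w by linarith)
      refine h.congr fun t => ?_
      simp only [id]; ring
    have hev : ∀ᶠ y : ℝ in atTop, Real.exp y ≥ 4*y + 2 := by
      have h1 : Tendsto (fun y : ℝ => Real.exp y / y) atTop atTop := by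
        simpa using Real.tendsto_exp_div_pow_atTop 1
      have h5 := h1.eventually_ge_atTop 5
      filter_upwards [h5, eventually_ge_atTop (2:ℝ)] with y h5y h2y
      have hy0 : 0 < y := by linarith
      have : 5 * y ≤ Real.exp y := by
        rw [le_div_iff₀ hy0] at h5y; linarith
      linarith
    filter_upwards [hy.eventually hev, eventually_gt_atTop 0] with t hexp ht
    rw [hσ t]
    have hx : 0 < w*t := by positivity
    set x := w*t with hx_def
    have hlow := le_S x hx
    have hsinh : Real.exp (2*x) / 4 ≤ Real.sinh (2*x) - 2*x := by
      rw [Real.sinh_eq]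
      have h1 : Real.exp (-(2*x)) ≤ 1 := Real.exp_le_one_iff.mpr (by linarith)
      have h2 : Real.exp (2*x) ≥ 4*(2*x) + 2 := hexp
      linarith
    have hstep : Real.exp (2*x) / (8*x) ≤ (Real.sinh (2*x) - 2*x) / (2*x) := by
      rw [div_le_div_iff₀ (by positivity) (by positivity)]
      nlinarith [hsinh, hx]
    have hchain : Real.exp (2*x) / (8*x) ≤
        ∑' m : ℕ, x^(2*(m+1)) / (((m+1).factorial : ℝ))^2 := le_trans hstep hlow
    have hmono := mul_le_mul_of_nonneg_left hchain (Real.exp_nonneg (-2*κ*t))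
    have hmul : Real.exp (-2*κ*t) * Real.exp (2*x) = Real.exp (a*t) := by
      rw [← Real.exp_add, hx_def, ha_def]; congr 1; ring
    calc Real.exp (a*t) / (8*w*t)
        = Real.exp (-2*κ*t) * (Real.exp (2*x) / (8*x)) := by
          rw [← hmul, hx_def]; field_simp
      _ ≤ _ := hmono
  refine ⟨fun hk => ⟨1, bdd hk⟩, tends, ⟨?_, ?_⟩⟩
  · intro hlim
    by_contra hk
    push_neg at hk
    have ht := tends hk
    have htop : Tendsto (fun t => ENNReal.ofReal (σ t)) atTop (nhds ⊤) :=
      ENNReal.tendsto_ofReal_atTop.comp ht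
    rw [htop.limsup_eq] at hlim
    exact lt_irrefl _ hlim
  · intro hk
    have hb := bdd hk
    have hev : ∀ᶠ t : ℝ in atTop, ENNReal.ofReal (σ t) ≤ ENNReal.ofReal 1 := by
      filter_upwards [eventually_ge_atTop (0:ℝ)] with t ht
      exact ENNReal.ofReal_le_ofReal (hb t ht)
    have hle : Filter.limsup (fun t => ENNReal.ofReal (σ t)) atTop ≤ ENNReal.ofReal 1 :=
      limsup_le_of_le (by isBoundedDefault) hev
    exact lt_of_le_of_lt hle ENNReal.ofReal_lt_top
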